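/- Every stable necklace of bounded ramification in ℝ^d has no cut points. -/

import Mathlib

open Set Topology Metric Bornology

noncomputable section

/-- Euclidean space `ℝ^d`. -/
abbrev Euc (d : ℕ) := EuclideanSpace ℝ (Fin d)

/-- A fractal necklace in `ℝ^d`: the attractor `F` of a necklace IFS `f_1, …, f_n`
(`n ≥ 3`) of contractive homeomorphisms of `ℝ^d`, where cyclically adjacent 1-level
copies meet in a single point (a main node `z k`) and non-adjacent copies are disjoint. -/
structure Necklace (d : ℕ) where
  n : ℕ
  hn : 3 ≤ n
  f : Fin n → (Euc d ≃ₜ Euc d)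
  contr : ∀ k, ∃ c : NNReal, c < 1 ∧ LipschitzWith c (f k)
  F : Set (Euc d)
  Fne : F.Nonempty
  Fcpt : IsCompact F
  Fattr : F = ⋃ k, (f k) '' F
  z : Fin n → Euc d
  hz : ∀ k : Fin n, (f k) '' F ∩ (f (k + ⟨1, by omega⟩)) '' F = {z k}
  hdisj : ∀ m k : Fin n, m ≠ k → m ≠ k + ⟨1, by omega⟩ → k ≠ m + ⟨1, by omega⟩ →
    (f m) '' F ∩ (f k) '' F = ∅

namespace Necklace

variable {d : ℕ}

/-- The digit `1` of `Fin n`. -/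
def one (N : Necklace d) : Fin N.n := ⟨1, by have := N.hn; omega⟩

/-- The homeomorphism `f_σ = f_{i₁} ∘ ⋯ ∘ f_{i_m}` associated to a word `σ = i₁⋯i_m`. -/
def word (N : Necklace d) : List (Fin N.n) → (Euc d ≃ₜ Euc d)
  | [] => Homeomorph.refl _
  | i :: s => (N.word s).trans (N.f i)

/-- The copy `F_σ = f_σ(F)` of the necklace. -/
def copy (N : Necklace d) (σ : List (Fin N.n)) : Set (Euc d) := N.word σ '' N.F

/-- `c_m(x)`: the number of words `σ` of length `m` with `x ∈ F_σ`. -/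
def cnt (N : Necklace d) (m : ℕ) (x : Euc d) : ℕ :=
  Set.ncard {σ : List (Fin N.n) | σ.length = m ∧ x ∈ N.copy σ}

/-- The boundary `∂_F F_k = {z_{k-1}, z_k}` of the 1-level copy `F_k` in `F`. -/
def bdry (N : Necklace d) (k : Fin N.n) : Set (Euc d) := {N.z (k - N.one), N.z k}

/-- A necklace is stable if for each `k` at least two second-level copies `F_{kj}`
meet `∂_F F_k`. -/
def Stable (N : Necklace d) : Prop :=
  ∀ k : Fin N.n,
    2 ≤ Set.ncard {A : Set (Euc d) |
      (∃ j : Fin N.n, A = N.f k '' (N.f j '' N.F)) ∧ (A ∩ N.bdry k).Nonempty}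

/-- A necklace is good if `∂_F F_k` is not contained in any second-level copy `F_{kj}`. -/
def Good (N : Necklace d) : Prop :=
  ∀ k j : Fin N.n, ¬ (N.bdry k ⊆ N.f k '' (N.f j '' N.F))

/-- A necklace is of bounded ramification if `{c_m(z_k)}_m` is bounded for each `k`. -/
def BoundedRamification (N : Necklace d) : Prop :=
  ∀ k : Fin N.n, ∃ C : ℕ, ∀ m : ℕ, N.cnt m (N.z k) ≤ C

/-- `M_F`: the set of points that are main nodes of some copy of `F`. -/
def MF (N : Necklace d) : Set (Euc d) :=
  {x | ∃ (σ : List (Fin N.n)) (k : Fin N.n), x = N.word σ (N.z k)}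

/-- A necklace has no cut points if `F \ {x}` is connected for every `x ∈ F`. -/
def NoCutPoints (N : Necklace d) : Prop :=
  ∀ x ∈ N.F, IsConnected (N.F \ {x})

/-- Property I: each 1-level copy `F_k` has an arc from `z_{k-1}` to `z_k` passing
through at least two main nodes of `F_k`. -/
def PropertyI (N : Necklace d) : Prop :=
  ∀ k : Fin N.n, ∃ γ : Path (N.z (k - N.one)) (N.z k),
    Function.Injective γ ∧ (∀ t, γ t ∈ N.f k '' N.F) ∧
    ∃ p q : Euc d, p ≠ q ∧ (∃ j, p = N.f k (N.z j)) ∧ (∃ j, q = N.f k (N.z j)) ∧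
      p ∈ Set.range γ ∧ q ∈ Set.range γ

/-- A necklace is self-similar if the maps of its NIFS are (contractive) similitudes. -/
def SelfSimilar (N : Necklace d) : Prop :=
  ∀ k : Fin N.n, ∃ c : ℝ, 0 < c ∧ c < 1 ∧ ∀ x y, dist (N.f k x) (N.f k y) = c * dist x y

/-- The open set condition for the NIFS of a necklace. -/
def OSC (N : Necklace d) : Prop :=
  ∃ V : Set (Euc d), V.Nonempty ∧ IsOpen V ∧ IsBounded V ∧
    (∀ k, N.f k '' V ⊆ V) ∧ ∀ j k : Fin N.n, j ≠ k → N.f j '' V ∩ N.f k '' V = ∅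

end Necklace
namespace Necklace

variable {d : ℕ} (N : Necklace d)

lemma npos : 0 < N.n := by have := N.hn; omega

lemma one_def : N.one = ⟨1, by have := N.hn; omega⟩ := rfl

lemma hz' (k : Fin N.n) : (N.f k '' N.F) ∩ (N.f (k + N.one) '' N.F) = {N.z k} := N.hz k

lemma hdisj' (m k : Fin N.n) (h1 : m ≠ k) (h2 : m ≠ k + N.one) (h3 : k ≠ m + N.one) :
    (N.f m '' N.F) ∩ (N.f k '' N.F) = ∅ := N.hdisj m k h1 h2 h3

lemma word_nil : N.word [] = Homeomorph.refl _ := rfl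

lemma word_cons (i : Fin N.n) (s : List (Fin N.n)) :
    N.word (i :: s) = (N.word s).trans (N.f i) := rfl

lemma word_apply (i : Fin N.n) (s : List (Fin N.n)) (y : Euc d) :
    N.word (i :: s) y = N.f i (N.word s y) := rfl

lemma word_append (s t : List (Fin N.n)) (y : Euc d) :
    N.word (s ++ t) y = N.word s (N.word t y) := by
  induction s with
  | nil => rfl
  | cons i s ih => simp only [List.cons_append, word_apply, ih]

lemma copy_nil : N.copy [] = N.F := by simp [copy, word_nil]

lemma copy_cons (i : Fin N.n) (s : List (Fin N.n)) :
    N.copy (i :: s) = N.f i '' N.copy s := by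
  simp only [copy, word_cons]
  rw [show ((N.word s).trans (N.f i) : Euc d → Euc d) = (N.f i) ∘ (N.word s) from rfl,
    Set.image_comp]

lemma copy_append (s t : List (Fin N.n)) :
    N.copy (s ++ t) = N.word s '' N.copy t := by
  induction s with
  | nil => simp only [List.nil_append, word_nil]
           rw [show ((Homeomorph.refl (Euc d)) : Euc d → Euc d) = id from rfl, Set.image_id]
  | cons i s ih =>
      simp only [List.cons_append, copy_cons, ih, word_cons]
      rw [show ((N.word s).trans (N.f i) : Euc d → Euc d) = (N.f i) ∘ (N.word s) from rfl,
        Set.image_comp]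

lemma f_image_subset (k : Fin N.n) : N.f k '' N.F ⊆ N.F := by
  conv_rhs => rw [N.Fattr]
  exact Set.subset_iUnion_of_subset k le_rfl

lemma copy_subset (σ : List (Fin N.n)) : N.copy σ ⊆ N.F := by
  induction σ with
  | nil => rw [copy_nil]
  | cons i s ih =>
      rw [copy_cons]
      exact (Set.image_mono ih).trans (N.f_image_subset i)

lemma copy_append_subset (s t : List (Fin N.n)) : N.copy (s ++ t) ⊆ N.copy s := by
  rw [copy_append]
  exact Set.image_mono (N.copy_subset t)

lemma copy_prefix_subset (s t u : List (Fin N.n)) (h : u = s ++ t) : N.copy u ⊆ N.copy s := by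
  subst h; exact N.copy_append_subset s t

lemma copy_nonempty (σ : List (Fin N.n)) : (N.copy σ).Nonempty := N.Fne.image _

lemma exists_child {y : Euc d} {β : List (Fin N.n)} (hy : y ∈ N.copy β) :
    ∃ j, y ∈ N.copy (β ++ [j]) := by
  rcases hy with ⟨w, hw, rfl⟩
  rw [N.Fattr] at hw
  rcases Set.mem_iUnion.mp hw with ⟨j, v, hv, hfv⟩
  refine ⟨j, ?_⟩
  rw [copy_append]
  exact ⟨N.f j v, by rw [copy_cons, copy_nil]; exact ⟨v, hv, rfl⟩, by rw [hfv]⟩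

lemma exists_word_level {y : Euc d} (hy : y ∈ N.F) (m : ℕ) :
    ∃ σ : List (Fin N.n), σ.length = m ∧ y ∈ N.copy σ := by
  induction m with
  | zero => exact ⟨[], rfl, by rwa [copy_nil]⟩
  | succ m ih =>
      rcases ih with ⟨σ, hl, hm⟩
      rcases N.exists_child hm with ⟨j, hj⟩
      exact ⟨σ ++ [j], by simp [hl], hj⟩

lemma z_mem_copy (k : Fin N.n) : N.z k ∈ N.f k '' N.F ∧ N.z k ∈ N.f (k + N.one) '' N.F := by
  have h := N.hz' k
  constructor
  · have : N.z k ∈ ({N.z k} : Set (Euc d)) := rfl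
    rw [← h] at this; exact this.1
  · have : N.z k ∈ ({N.z k} : Set (Euc d)) := rfl
    rw [← h] at this; exact this.2

lemma z_mem_F (k : Fin N.n) : N.z k ∈ N.F := N.f_image_subset k (N.z_mem_copy k).1

/-- intersections of sibling copies -/
lemma image_inter_image (g : Euc d ≃ₜ Euc d) (A B : Set (Euc d)) :
    g '' A ∩ g '' B = g '' (A ∩ B) :=
  (Set.image_inter g.injective).symm

lemma sibling_inter (θ : List (Fin N.n)) (u v : Fin N.n) :
    N.copy (θ ++ [u]) ∩ N.copy (θ ++ [v]) =
      N.word θ '' ((N.f u '' N.F) ∩ (N.f v '' N.F)) := by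
  rw [copy_append, copy_append, ← image_inter_image]
  congr 1 <;> rw [copy_cons, copy_nil]

lemma sibling_inter_adj (θ : List (Fin N.n)) (u : Fin N.n) :
    N.copy (θ ++ [u]) ∩ N.copy (θ ++ [u + N.one]) = {N.word θ (N.z u)} := by
  rw [sibling_inter, N.hz' u, Set.image_singleton]

lemma sibling_inter_empty (θ : List (Fin N.n)) {u v : Fin N.n} (h1 : u ≠ v)
    (h2 : v ≠ u + N.one) (h3 : u ≠ v + N.one) :
    N.copy (θ ++ [u]) ∩ N.copy (θ ++ [v]) = ∅ := by
  rw [sibling_inter, N.hdisj' u v h1 h3 h2,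
    Set.image_empty]

/-- If a point lies in two distinct sibling copies, they are adjacent and the
point is the corresponding node image. -/
lemma splitNode {θ : List (Fin N.n)} {u v : Fin N.n} {x : Euc d} (huv : u ≠ v)
    (hu : x ∈ N.copy (θ ++ [u])) (hv : x ∈ N.copy (θ ++ [v])) :
    ∃ a : Fin N.n, ((v = u + N.one ∧ a = u) ∨ (u = v + N.one ∧ a = v)) ∧
      x = N.word θ (N.z a) := by
  by_cases h2 : v = u + N.one
  · refine ⟨u, Or.inl ⟨h2, rfl⟩, ?_⟩
    have : x ∈ N.copy (θ ++ [u]) ∩ N.copy (θ ++ [u + N.one]) := ⟨hu, by rwa [← h2]⟩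
    rw [sibling_inter_adj] at this; exact this
  by_cases h3 : u = v + N.one
  · refine ⟨v, Or.inr ⟨h3, rfl⟩, ?_⟩
    have : x ∈ N.copy (θ ++ [v]) ∩ N.copy (θ ++ [v + N.one]) := ⟨hv, by rwa [← h3]⟩
    rw [sibling_inter_adj] at this; exact this
  · exfalso
    have := N.sibling_inter_empty θ huv h2 h3
    rw [Set.eq_empty_iff_forall_notMem] at this
    exact this x ⟨hu, hv⟩

end Necklace
namespace Necklace

variable {d : ℕ} (N : Necklace d)

/-- A uniform contraction ratio. -/
lemma exists_ratio : ∃ c : NNReal, c < 1 ∧ ∀ k, LipschitzWith c (N.f k) := by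
  classical
  refine ⟨Finset.univ.sup (fun k => Classical.choose (N.contr k)), ?_, ?_⟩
  · rw [Finset.sup_lt_iff (by norm_num : (⊥ : NNReal) < 1)]
    intro k _
    exact (Classical.choose_spec (N.contr k)).1
  · intro k
    exact (Classical.choose_spec (N.contr k)).2.weaken
      (Finset.le_sup (f := fun k => Classical.choose (N.contr k)) (Finset.mem_univ k))

lemma ediam_copy_le (c : NNReal) (hc : ∀ k, LipschitzWith c (N.f k)) (σ : List (Fin N.n)) :
    EMetric.diam (N.copy σ) ≤ (c : ENNReal) ^ σ.length * EMetric.diam N.F := by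
  induction σ with
  | nil => rw [copy_nil]; simp
  | cons i s ih =>
      rw [copy_cons]
      calc EMetric.diam (N.f i '' N.copy s) ≤ c * EMetric.diam (N.copy s) :=
            (hc i).ediam_image_le _
        _ ≤ c * ((c : ENNReal) ^ s.length * EMetric.diam N.F) := by
            exact mul_le_mul_right ih _
        _ = (c : ENNReal) ^ (i :: s).length * EMetric.diam N.F := by
            rw [List.length_cons, pow_succ, mul_comm ((c:ENNReal) ^ s.length) (c:ENNReal), mul_assoc]

/-- Two distinct points are eventually not in a common copy. -/
lemma smallSep {p q : Euc d} (hpq : p ≠ q) :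
    ∃ m₀ : ℕ, ∀ σ : List (Fin N.n), m₀ ≤ σ.length → p ∈ N.copy σ → q ∈ N.copy σ → False := by
  obtain ⟨c, hc1, hc⟩ := N.exists_ratio
  have hD : EMetric.diam N.F ≠ ⊤ := N.Fcpt.isBounded.ediam_ne_top
  have hT : Filter.Tendsto (fun m => (c : ENNReal) ^ m * EMetric.diam N.F)
      Filter.atTop (nhds 0) := by
    have h0 : Filter.Tendsto (fun m => (c : ENNReal) ^ m) Filter.atTop (nhds 0) :=
      ENNReal.tendsto_pow_atTop_nhds_zero_of_lt_one (by exact_mod_cast hc1)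
    have := ENNReal.Tendsto.mul_const (b := EMetric.diam N.F) h0 (Or.inr hD)
    simpa using this
  have hε : (0 : ENNReal) < edist p q := by
    simp [edist_pos, hpq]
  have hev : ∀ᶠ m in Filter.atTop,
      (c : ENNReal) ^ m * EMetric.diam N.F < edist p q :=
    hT.eventually_lt_const hε
  rcases Filter.eventually_atTop.mp hev with ⟨m₀, hm₀⟩
  refine ⟨m₀, fun σ hlen hp hq => ?_⟩
  have h1 : edist p q ≤ EMetric.diam (N.copy σ) := EMetric.edist_le_diam_of_mem hp hq
  have h2 := N.ediam_copy_le c hc σ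
  have h3 : (c : ENNReal) ^ σ.length * EMetric.diam N.F < edist p q := hm₀ σ.length hlen
  exact absurd ((h1.trans h2).trans_lt h3) (lt_irrefl _)

end Necklace
namespace Necklace

variable {d : ℕ} (N : Necklace d)

section Nerve

/-- plain nerve relation at level m -/
def nrel (m : ℕ) (a b : List (Fin N.n)) : Prop :=
  a.length = m ∧ b.length = m ∧ (N.copy a ∩ N.copy b).Nonempty

lemma nrel_symm (m : ℕ) : Symmetric (N.nrel m) := by
  intro a b ⟨h1, h2, h3⟩
  exact ⟨h2, h1, by rwa [Set.inter_comm]⟩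

lemma fin_one_val : (N.one).val = 1 := rfl

lemma fin_add_one_val (i : Fin N.n) : (i + N.one).val = (i.val + 1) % N.n := rfl

/-- Chain among words with the same head via the sub-level chain. -/
lemma nerve_lift (m : ℕ) (i : Fin N.n) {s t : List (Fin N.n)}
    (h : Relation.ReflTransGen (N.nrel m) s t) :
    Relation.ReflTransGen (N.nrel (m+1)) (i :: s) (i :: t) := by
  refine Relation.ReflTransGen.lift (fun l => i :: l) ?_ _ _ h
  rintro a b ⟨h1, h2, h3⟩
  refine ⟨by simp [h1], by simp [h2], ?_⟩
  rw [copy_cons, copy_cons, image_inter_image]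
  exact h3.image _

lemma nerve_cross (m : ℕ) (i : Fin N.n) :
    ∃ s₁ s₂ : List (Fin N.n), s₁.length = m ∧ s₂.length = m ∧
      N.nrel (m+1) (i :: s₁) ((i + N.one) :: s₂) := by
  have h1 : N.z i ∈ N.f i '' N.F := (N.z_mem_copy i).1
  have h2 : N.z i ∈ N.f (i + N.one) '' N.F := (N.z_mem_copy i).2
  rcases h1 with ⟨w1, hw1, hfw1⟩
  rcases h2 with ⟨w2, hw2, hfw2⟩
  rcases N.exists_word_level hw1 m with ⟨s₁, hl1, hm1⟩
  rcases N.exists_word_level hw2 m with ⟨s₂, hl2, hm2⟩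
  refine ⟨s₁, s₂, hl1, hl2, by simp [hl1], by simp [hl2], ⟨N.z i, ?_, ?_⟩⟩
  · rw [copy_cons]; exact ⟨w1, hm1, hfw1⟩
  · rw [copy_cons]; exact ⟨w2, hm2, hfw2⟩

/-- All words of a given level are chained. -/
lemma nerve_conn : ∀ (m : ℕ) (σ τ : List (Fin N.n)), σ.length = m → τ.length = m →
    Relation.ReflTransGen (N.nrel m) σ τ := by
  intro m
  induction m with
  | zero =>
      intro σ τ hσ hτ
      rw [List.length_eq_zero_iff] at hσ hτ
      subst hσ; subst hτ; exact Relation.ReflTransGen.refl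
  | succ m ih =>
      -- first: all words with head i are connected to a word with head 0
      have symm : Symmetric (Relation.ReflTransGen (N.nrel (m+1))) := fun a b h => @Std.Symm.symm _ _ (@Relation.ReflTransGen.stdSymm _ _ ⟨N.nrel_symm (m+1)⟩) a b h
      have base : ∀ (t : ℕ) (ht : t < N.n) (s : List (Fin N.n)), s.length = m →
          ∃ s₀ : List (Fin N.n), s₀.length = m ∧
            Relation.ReflTransGen (N.nrel (m+1)) ((⟨t, ht⟩ : Fin N.n) :: s) ((⟨0, N.npos⟩ : Fin N.n) :: s₀) := by
        intro t
        induction t with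
        | zero => intro ht s hs; exact ⟨s, hs, Relation.ReflTransGen.refl⟩
        | succ t iht =>
            intro ht s hs
            have ht' : t < N.n := by omega
            obtain ⟨s₁, s₂, hl1, hl2, hcr⟩ := N.nerve_cross m (⟨t, ht'⟩ : Fin N.n)
            have heq : (⟨t, ht'⟩ : Fin N.n) + N.one = ⟨t+1, ht⟩ := by
              apply Fin.ext
              rw [fin_add_one_val]
              have : N.one.val = 1 := rfl
              rw [Nat.mod_eq_of_lt ht]
            rw [heq] at hcr
            obtain ⟨s₀, hl0, hch⟩ := iht ht' s₁ hl1
            refine ⟨s₀, hl0, ?_⟩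
            refine Relation.ReflTransGen.trans (N.nerve_lift m _ (ih s s₂ hs hl2)) ?_
            exact Relation.ReflTransGen.trans
              (Relation.ReflTransGen.single (N.nrel_symm _ hcr)) hch
      intro σ τ hσ hτ
      match σ, τ with
      | i :: s, j :: u =>
        have hs : s.length = m := by simpa using hσ
        have hu : u.length = m := by simpa using hτ
        obtain ⟨s₀, hl0, hch⟩ := base i.val i.isLt s hs
        obtain ⟨u₀, hul0, huch⟩ := base j.val j.isLt u hu
        have hi : (⟨i.val, i.isLt⟩ : Fin N.n) = i := rfl
        have hj : (⟨j.val, j.isLt⟩ : Fin N.n) = j := rfl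
        rw [hi] at hch; rw [hj] at huch
        refine hch.trans (Relation.ReflTransGen.trans ?_ (symm huch))
        exact N.nerve_lift m _ (ih s₀ u₀ hl0 hul0)

end Nerve

/-- F is preconnected. -/
lemma F_preconnected : IsPreconnected N.F := by
  classical
  intro U V hU hV hcov hAne hBne
  by_contra hem
  have hem' : N.F ∩ (U ∩ V) = ∅ := Set.not_nonempty_iff_eq_empty.mp hem
  set A : Set (Euc d) := N.F ∩ U with hA
  set B : Set (Euc d) := N.F ∩ V with hB
  have hdisjAB : ∀ y, y ∈ A → y ∈ B → False := by
    intro y hyA hyB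
    have : y ∈ N.F ∩ (U ∩ V) := ⟨hyA.1, hyA.2, hyB.2⟩
    rw [hem'] at this; exact this
  have memA : ∀ y, y ∈ N.F → y ∉ B → y ∈ A := by
    intro y hyF hyB
    rcases hcov hyF with h | h
    · exact ⟨hyF, h⟩
    · exact absurd ⟨hyF, h⟩ hyB
  have memB : ∀ y, y ∈ N.F → y ∉ A → y ∈ B := by
    intro y hyF hyA
    rcases hcov hyF with h | h
    · exact absurd ⟨hyF, h⟩ hyA
    · exact ⟨hyF, h⟩
  have hAcl : IsCompact A := by
    have : A = N.F \ V := by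
      ext y
      exact ⟨fun hy => ⟨hy.1, fun hyV => hdisjAB y hy ⟨hy.1, hyV⟩⟩,
        fun hy => memA y hy.1 (fun hyB => hy.2 hyB.2)⟩
    rw [this]; exact N.Fcpt.diff hV
  have hBcl : IsCompact B := by
    have : B = N.F \ U := by
      ext y
      exact ⟨fun hy => ⟨hy.1, fun hyU => hdisjAB y ⟨hy.1, hyU⟩ hy⟩,
        fun hy => memB y hy.1 (fun hyA => hy.2 hyA.2)⟩
    rw [this]; exact N.Fcpt.diff hU
  -- minimum distance
  have hprod : IsCompact (A ×ˢ B) := hAcl.prod hBcl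
  have hne : (A ×ˢ B).Nonempty := hAne.prod hBne
  have hcont : ContinuousOn (fun p : Euc d × Euc d => edist p.1 p.2) (A ×ˢ B) :=
    (continuous_fst.edist continuous_snd).continuousOn
  obtain ⟨⟨a₀, b₀⟩, hab, hmin⟩ := hprod.exists_isMinOn hne hcont
  set ε : ENNReal := edist a₀ b₀ with hε
  have hεpos : 0 < ε := by
    rw [hε, edist_pos]
    intro h
    exact hdisjAB a₀ hab.1 (h ▸ hab.2)
  have hsep : ∀ p ∈ A, ∀ q ∈ B, ε ≤ edist p q := by
    intro p hp q hq
    exact isMinOn_iff.mp hmin (p, q) (Set.mk_mem_prod hp hq)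
  -- small level
  obtain ⟨c, hc1, hc⟩ := N.exists_ratio
  have hD : EMetric.diam N.F ≠ ⊤ := N.Fcpt.isBounded.ediam_ne_top
  have hT : Filter.Tendsto (fun m => (c : ENNReal) ^ m * EMetric.diam N.F)
      Filter.atTop (nhds 0) := by
    have h0 : Filter.Tendsto (fun m => (c : ENNReal) ^ m) Filter.atTop (nhds 0) :=
      ENNReal.tendsto_pow_atTop_nhds_zero_of_lt_one (by exact_mod_cast hc1)
    simpa using ENNReal.Tendsto.mul_const (b := EMetric.diam N.F) h0 (Or.inr hD)
  obtain ⟨m, hm⟩ := Filter.eventually_atTop.mp (hT.eventually_lt_const hεpos)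
  have hsmall : ∀ σ : List (Fin N.n), σ.length = m → EMetric.diam (N.copy σ) < ε := by
    intro σ hσ
    exact (N.ediam_copy_le c hc σ).trans_lt (hσ ▸ hm m le_rfl)
  -- every level-m copy is in A or B
  have hside : ∀ σ : List (Fin N.n), σ.length = m → (N.copy σ ⊆ A ∨ N.copy σ ⊆ B) := by
    intro σ hσ
    by_cases hmeets : (N.copy σ ∩ B).Nonempty
    · right
      intro y hy
      by_contra hyB
      have hyA : y ∈ A := memA y (N.copy_subset σ hy) hyB
      rcases hmeets with ⟨q, hqc, hqB⟩
      have h1 := hsep y hyA q hqB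
      have h2 : edist y q ≤ EMetric.diam (N.copy σ) := EMetric.edist_le_diam_of_mem hy hqc
      exact absurd (h1.trans h2) (not_le.mpr (hsmall σ hσ))
    · left
      intro y hy
      refine memA y (N.copy_subset σ hy) (fun hyB => hmeets ⟨y, hy, hyB⟩)
  -- chain contradiction
  rcases hAne with ⟨a, haA⟩
  rcases hBne with ⟨b, hbB⟩
  obtain ⟨σa, hla, hma⟩ := N.exists_word_level haA.1 m
  obtain ⟨σb, hlb, hmb⟩ := N.exists_word_level hbB.1 m
  have hchain := N.nerve_conn m σa σb hla hlb
  have keep : ∀ τ, Relation.ReflTransGen (N.nrel m) σa τ → N.copy τ ⊆ A := by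
    intro τ hτ
    induction hτ with
    | refl =>
        rcases hside σa hla with h | h
        · exact h
        · exact absurd (h hma) (fun hc => hdisjAB a haA hc)
    | tail hab2 hrel ih =>
        rcases hrel with ⟨h1, h2, ⟨y, hy1, hy2⟩⟩
        rcases hside _ h2 with h | h
        · exact h
        · exact absurd (h hy2) (fun hc => hdisjAB y (ih hy1) hc)
  exact hdisjAB b (keep σb hchain hmb) hbB

lemma copy_preconnected (σ : List (Fin N.n)) : IsPreconnected (N.copy σ) :=
  N.F_preconnected.image _ (N.word σ).continuous.continuousOn

end Necklace
namespace Necklace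

variable {d : ℕ} (N : Necklace d)

section Counting

/-- The set of words of length `m` whose copy contains `x`. -/
def Wrd (x : Euc d) (m : ℕ) : Set (List (Fin N.n)) :=
  {σ | σ.length = m ∧ x ∈ N.copy σ}

lemma cnt_eq_ncard (x : Euc d) (m : ℕ) : N.cnt m x = (N.Wrd x m).ncard := rfl

lemma Wrd_finite (x : Euc d) (m : ℕ) : (N.Wrd x m).Finite :=
  (List.finite_length_eq (Fin N.n) m).subset (fun _ h => h.1)

lemma ncard_biUnion_le {α : Type*} (s : Finset ℕ) (t : ℕ → Set α)
    (hfin : ∀ l, (t l).Finite) : (⋃ l ∈ s, t l).ncard ≤ ∑ l ∈ s, (t l).ncard := by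
  classical
  induction s using Finset.induction with
  | empty => simp
  | insert a s hnotmem ih =>
      rw [Finset.set_biUnion_insert, Finset.sum_insert hnotmem]
      exact (Set.ncard_union_le _ _).trans (by omega)

lemma listSplit {α : Type*} : ∀ (σ τ : List α), σ.length = τ.length → σ ≠ τ →
    ∃ (θ : List α) (i i' : α) (u u' : List α), i ≠ i' ∧ σ = θ ++ i :: u ∧ τ = θ ++ i' :: u' := by
  intro σ
  induction σ with
  | nil =>
      intro τ hlen hne
      exfalso
      exact hne (by cases τ with
        | nil => rfl
        | cons a t => simp at hlen)
  | cons a s ih =>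
      intro τ hlen hne
      cases τ with
      | nil => simp at hlen
      | cons b t =>
          by_cases hab : a = b
          · subst hab
            have hst : s ≠ t := fun h => hne (by rw [h])
            obtain ⟨θ, i, i', u, u', hii, hs, ht⟩ := ih t (by simpa using hlen) hst
            exact ⟨a :: θ, i, i', u, u', hii, by simp [hs], by simp [ht]⟩
          · exact ⟨[], a, b, s, t, hab, by simp, by simp⟩

/-- From two distinct same-length words containing `x`, extract a node representation. -/
lemma rep_of_two {x : Euc d} {σ τ : List (Fin N.n)} (hσ : x ∈ N.copy σ) (hτ : x ∈ N.copy τ)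
    (hlen : σ.length = τ.length) (hne : σ ≠ τ) :
    ∃ (θ : List (Fin N.n)) (a : Fin N.n), x = N.word θ (N.z a) := by
  obtain ⟨θ, i, i', u, u', hii, hs, ht⟩ := listSplit σ τ hlen hne
  have h1 : x ∈ N.copy (θ ++ [i]) :=
    N.copy_prefix_subset (θ ++ [i]) u σ (by rw [hs, List.append_cons]) hσ
  have h2 : x ∈ N.copy (θ ++ [i']) :=
    N.copy_prefix_subset (θ ++ [i']) u' τ (by rw [ht, List.append_cons]) hτ
  obtain ⟨a, _, hx⟩ := N.splitNode hii h1 h2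
  exact ⟨θ, a, hx⟩

lemma cnt_mono (x : Euc d) (m : ℕ) : N.cnt m x ≤ N.cnt (m+1) x := by
  classical
  set pick : List (Fin N.n) → Fin N.n := fun σ =>
    if h : ∃ j, x ∈ N.copy (σ ++ [j]) then h.choose else ⟨0, N.npos⟩ with hpick
  set g : List (Fin N.n) → List (Fin N.n) := fun σ => σ ++ [pick σ] with hg
  have hmaps : ∀ σ ∈ N.Wrd x m, g σ ∈ N.Wrd x (m+1) := by
    rintro σ ⟨hlen, hmem⟩
    have h : ∃ j, x ∈ N.copy (σ ++ [j]) := N.exists_child hmem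
    refine ⟨by simp [hg, hlen], ?_⟩
    simp only [hg, hpick, dif_pos h]
    exact h.choose_spec
  have hinj : Set.InjOn g (N.Wrd x m) := by
    rintro σ ⟨hl1, _⟩ τ ⟨hl2, _⟩ heq
    exact List.append_inj_left heq (by rw [hl1, hl2])
  calc N.cnt m x = (g '' N.Wrd x m).ncard := (Set.ncard_image_of_injOn hinj).symm
    _ ≤ (N.Wrd x (m+1)).ncard := Set.ncard_le_ncard
        (fun y ⟨σ, hσ, hyσ⟩ => hyσ ▸ hmaps σ hσ) (N.Wrd_finite x (m+1))

lemma cnt_monotone (x : Euc d) : Monotone (fun m => N.cnt m x) :=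
  monotone_nat_of_le_succ (N.cnt_mono x)

lemma cnt_branch {x : Euc d} {β : List (Fin N.n)} {j j' : Fin N.n}
    (hj : x ∈ N.copy (β ++ [j])) (hj' : x ∈ N.copy (β ++ [j'])) (hjj : j ≠ j') :
    N.cnt β.length x + 1 ≤ N.cnt (β.length + 1) x := by
  classical
  set pick : List (Fin N.n) → Fin N.n := fun σ =>
    if h : ∃ j, x ∈ N.copy (σ ++ [j]) then h.choose else ⟨0, N.npos⟩ with hpick
  set g : List (Fin N.n) → List (Fin N.n) := fun σ => σ ++ [pick σ] with hg
  have hmaps : ∀ σ ∈ N.Wrd x β.length, g σ ∈ N.Wrd x (β.length + 1) := by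
    rintro σ ⟨hlen, hmem⟩
    have h : ∃ j, x ∈ N.copy (σ ++ [j]) := N.exists_child hmem
    refine ⟨by simp [hg, hlen], ?_⟩
    simp only [hg, hpick, dif_pos h]
    exact h.choose_spec
  have hinj : Set.InjOn g (N.Wrd x β.length) := by
    rintro σ ⟨hl1, _⟩ τ ⟨hl2, _⟩ heq
    exact List.append_inj_left heq (by rw [hl1, hl2])
  set j₂ : Fin N.n := if pick β = j then j' else j with hj₂
  have hj₂mem : β ++ [j₂] ∈ N.Wrd x (β.length + 1) := by
    refine ⟨by simp, ?_⟩
    by_cases h : pick β = j <;> simp [hj₂, h, hj, hj']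
  have hnotin : β ++ [j₂] ∉ g '' N.Wrd x β.length := by
    rintro ⟨σ, ⟨hl, _⟩, heq⟩
    have hσβ : σ = β := List.append_inj_left heq (by rw [hl])
    subst hσβ
    have hpj : pick σ = j₂ := by
      have := List.append_inj_right heq rfl
      simpa using this
    by_cases h : pick σ = j
    · rw [hj₂, if_pos h] at hpj
      exact hjj (h ▸ hpj ▸ rfl)
    · rw [hj₂, if_neg h] at hpj
      exact h hpj
  have himg : g '' N.Wrd x β.length ⊆ N.Wrd x (β.length + 1) \ {β ++ [j₂]} := by
    rintro y ⟨σ, hσ, rfl⟩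
    exact ⟨hmaps σ hσ, fun hy => hnotin ⟨σ, hσ, by rw [← hy]⟩⟩
  have h1 : (N.Wrd x β.length).ncard ≤ (N.Wrd x (β.length + 1) \ {β ++ [j₂]}).ncard := by
    calc (N.Wrd x β.length).ncard = (g '' N.Wrd x β.length).ncard :=
          (Set.ncard_image_of_injOn hinj).symm
      _ ≤ _ := Set.ncard_le_ncard himg ((N.Wrd_finite x (β.length + 1)).diff)
  have h2 : (N.Wrd x (β.length + 1) \ {β ++ [j₂]}).ncard = (N.Wrd x (β.length + 1)).ncard - 1 :=
    Set.ncard_diff_singleton_of_mem hj₂mem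
  have h3 : 1 ≤ (N.Wrd x (β.length + 1)).ncard := by
    rw [Nat.one_le_iff_ne_zero]
    intro h0
    have hpos := Set.ncard_pos (N.Wrd_finite x (β.length + 1))
    rw [h0] at hpos
    exact absurd (hpos.mpr ⟨_, hj₂mem⟩) (lt_irrefl 0)
  rw [cnt_eq_ncard, cnt_eq_ncard]
  omega

/-- Counting words extending a fixed node-representation prefix. -/
lemma ext_count {x : Euc d} {θ : List (Fin N.n)} {a : Fin N.n}
    (hx : x = N.word θ (N.z a)) (m : ℕ) :
    {σ | σ.length = m ∧ x ∈ N.copy σ ∧ θ <+: σ}.ncard ≤ N.cnt (m - θ.length) (N.z a) := by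
  classical
  set S := {σ | σ.length = m ∧ x ∈ N.copy σ ∧ θ <+: σ} with hS
  have hSfin : S.Finite := (List.finite_length_eq (Fin N.n) m).subset (fun _ h => h.1)
  set g : List (Fin N.n) → List (Fin N.n) := fun σ => σ.drop θ.length with hg
  have key : ∀ σ ∈ S, σ = θ ++ g σ := by
    rintro σ ⟨hlen, hmem, ⟨u, hu⟩⟩
    rw [hg]
    simp only
    rw [← hu, List.drop_left]
  have hinj : Set.InjOn g S := by
    intro σ hσ τ hτ heq
    rw [key σ hσ, key τ hτ, heq]
  have hmaps : ∀ σ ∈ S, g σ ∈ N.Wrd (N.z a) (m - θ.length) := by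
    rintro σ hσ
    obtain ⟨hlen, hmem, hpre⟩ := hσ
    constructor
    · simp [hg, hlen]
    · have hσeq := key σ ⟨hlen, hmem, hpre⟩
      rw [hσeq, copy_append] at hmem
      rcases hmem with ⟨y, hy, hxy⟩
      have : y = N.z a := by
        apply (N.word θ).injective
        rw [hxy, ← hx]
      rwa [← this]
  calc S.ncard = (g '' S).ncard := (Set.ncard_image_of_injOn hinj).symm
    _ ≤ _ := Set.ncard_le_ncard (fun y ⟨σ, hσ, hyσ⟩ => hyσ ▸ hmaps σ hσ)
        (N.Wrd_finite _ _)

/-- Global bound on the number of same-level copies containing a point. -/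
lemma cnt_bound (hbr : N.BoundedRamification) (x : Euc d) :
    ∃ C, ∀ m, N.cnt m x ≤ C := by
  classical
  set Cmax := Finset.univ.sup (fun k => Classical.choose (hbr k)) with hCmax
  have hCk : ∀ (k : Fin N.n) (m : ℕ), N.cnt m (N.z k) ≤ Cmax := by
    intro k m
    exact (Classical.choose_spec (hbr k) m).trans
      (Finset.le_sup (f := fun k => Classical.choose (hbr k)) (Finset.mem_univ k))
  by_cases hrep : ∃ (θ : List (Fin N.n)) (a : Fin N.n), x = N.word θ (N.z a)
  · obtain ⟨θ₀, a₀, hx₀⟩ := hrep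
    set L := θ₀.length with hL
    have hbig : ∀ m, L ≤ m → N.cnt m x ≤ (L + 1) * Cmax := by
      intro m hLm
      set P : List (Fin N.n) → ℕ → Prop := fun σ l => σ.take l = θ₀.take l with hP
      set piece : ℕ → Set (List (Fin N.n)) := fun l =>
        {σ ∈ N.Wrd x m | Nat.findGreatest (P σ) L = l} with hpiece
      have hcover : N.Wrd x m ⊆ ⋃ l ∈ Finset.range (L+1), piece l := by
        intro σ hσ
        have hle : Nat.findGreatest (P σ) L ≤ L := Nat.findGreatest_le L
        exact Set.mem_biUnion (Finset.mem_range.mpr (by omega)) ⟨hσ, rfl⟩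
      have hpfin : ∀ l, (piece l).Finite := fun l =>
        (N.Wrd_finite x m).subset (fun σ h => h.1)
      have hbound : ∀ l ∈ Finset.range (L+1), (piece l).ncard ≤ Cmax := by
        intro l hl
        rcases Set.eq_empty_or_nonempty (piece l) with hemp | ⟨σ₁, hσ₁⟩
        · rw [hemp]; simp
        · -- get a representation at θ₀.take l
          have hlL : l ≤ L := hσ₁.2 ▸ Nat.findGreatest_le (P := P σ₁) L
          have hrepl : ∃ b, x = N.word (θ₀.take l) (N.z b) := by
            rcases eq_or_lt_of_le hlL with heq | hlt
            · subst heq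
              rw [List.take_length]
              exact ⟨a₀, hx₀⟩
            · -- split at position l
              obtain ⟨hσ₁W, hσ₁fg⟩ := hσ₁
              have hPl : σ₁.take l = θ₀.take l := by
                have h0 : P σ₁ 0 := rfl
                have := Nat.findGreatest_spec (Nat.zero_le L) h0
                rw [hσ₁fg] at this
                exact this
              have hnPl1 : ¬ P σ₁ (l+1) :=
                Nat.findGreatest_is_greatest (k := l+1) (n := L) (by rw [hσ₁fg]; omega)
                  (by omega)
              have hnPl1' : σ₁.take (l+1) ≠ θ₀.take (l+1) := hnPl1
              have hmlen : σ₁.length = m := hσ₁W.1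
              have hlenσ : l < σ₁.length := by omega
              have hlenθ : l < θ₀.length := hlt
              have hii : σ₁[l]'(hlenσ) ≠ θ₀[l]'(hlenθ) := by
                intro h
                apply hnPl1'
                rw [List.take_succ, List.take_succ,
                  List.getElem?_eq_getElem hlenσ, List.getElem?_eq_getElem hlenθ,
                  hPl, h]
              have hσsplit : σ₁ = σ₁.take l ++ σ₁[l]'(hlenσ) :: σ₁.drop (l+1) := by
                conv_lhs => rw [← List.take_append_drop l σ₁]
                rw [List.drop_eq_getElem_cons hlenσ]
              have hθsplit : θ₀ = θ₀.take l ++ θ₀[l]'(hlenθ) :: θ₀.drop (l+1) := by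
                conv_lhs => rw [← List.take_append_drop l θ₀]
                rw [List.drop_eq_getElem_cons hlenθ]
              have h1 : x ∈ N.copy (σ₁.take l ++ [σ₁[l]'(hlenσ)]) :=
                N.copy_prefix_subset _ (σ₁.drop (l+1)) σ₁
                  (by rw [← List.append_cons, ← hσsplit]) hσ₁W.2
              have h2 : x ∈ N.copy (θ₀.take l ++ [θ₀[l]'(hlenθ)]) := by
                refine N.copy_prefix_subset _ (θ₀.drop (l+1)) θ₀
                  (by rw [← List.append_cons, ← hθsplit]) ?_
                rw [hx₀, copy]
                exact ⟨N.z a₀, N.z_mem_F a₀, rfl⟩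
              rw [hPl] at h1
              obtain ⟨b, _, hxb⟩ := N.splitNode hii h1 h2
              exact ⟨b, hxb⟩
          obtain ⟨b, hb⟩ := hrepl
          have hsub : piece l ⊆ {σ | σ.length = m ∧ x ∈ N.copy σ ∧ (θ₀.take l) <+: σ} := by
            rintro σ ⟨⟨hlen, hmem⟩, hfg⟩
            refine ⟨hlen, hmem, ?_⟩
            have hPl : σ.take l = θ₀.take l := by
              have h0 : P σ 0 := rfl
              have := Nat.findGreatest_spec (Nat.zero_le L) h0
              rw [hfg] at this
              exact this
            rw [← hPl]
            exact List.take_prefix l σ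
          calc (piece l).ncard ≤ _ := Set.ncard_le_ncard hsub
                ((List.finite_length_eq (Fin N.n) m).subset (fun _ h => h.1))
            _ ≤ N.cnt (m - (θ₀.take l).length) (N.z b) := N.ext_count hb m
            _ ≤ Cmax := hCk b _
      calc N.cnt m x ≤ (⋃ l ∈ Finset.range (L+1), piece l).ncard := by
            rw [cnt_eq_ncard]
            refine Set.ncard_le_ncard hcover ?_
            refine Set.Finite.biUnion (Finset.range (L+1)).finite_toSet (fun l _ => hpfin l)
        _ ≤ ∑ l ∈ Finset.range (L+1), (piece l).ncard := ncard_biUnion_le _ _ hpfin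
        _ ≤ ∑ l ∈ Finset.range (L+1), Cmax := Finset.sum_le_sum hbound
        _ = (L+1) * Cmax := by rw [Finset.sum_const, Finset.card_range, smul_eq_mul]
    refine ⟨(L+1) * Cmax, fun m => ?_⟩
    rcases le_or_gt L m with h | h
    · exact hbig m h
    · exact (N.cnt_monotone x (le_of_lt h)).trans (hbig L le_rfl)
  · -- no representation: at most one word per level
    push_neg at hrep
    refine ⟨1, fun m => ?_⟩
    rw [cnt_eq_ncard]
    rcases Set.eq_empty_or_nonempty (N.Wrd x m) with hemp | ⟨σ, hσ⟩
    · rw [hemp]; simp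
    · refine (Set.ncard_le_ncard (t := {σ}) ?_ (Set.finite_singleton σ)).trans
        (by simp)
      intro τ hτ
      by_contra hne
      obtain ⟨θ, a, hxa⟩ := N.rep_of_two hτ.2 hσ.2 (by rw [hτ.1, hσ.1]) hne
      exact hrep θ a hxa
  
/-- Eventually each x-word has a unique x-child. -/
lemma exists_tame (hbr : N.BoundedRamification) (x : Euc d) :
    ∃ M : ℕ, ∀ β : List (Fin N.n), x ∈ N.copy β → M ≤ β.length →
      ∀ j j', x ∈ N.copy (β ++ [j]) → x ∈ N.copy (β ++ [j']) → j = j' := by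
  classical
  obtain ⟨C, hC⟩ := N.cnt_bound hbr x
  by_contra hcon
  push_neg at hcon
  have grow : ∀ t, ∃ m, t ≤ N.cnt m x := by
    intro t
    induction t with
    | zero => exact ⟨0, Nat.zero_le _⟩
    | succ t ih =>
        obtain ⟨m, hm⟩ := ih
        obtain ⟨β, hβmem, hβlen, j, j', hj, hj', hjj⟩ := hcon m
        have h1 : N.cnt m x ≤ N.cnt β.length x := N.cnt_monotone x hβlen
        have h2 := N.cnt_branch hj hj' hjj
        exact ⟨β.length + 1, by omega⟩
  obtain ⟨m, hm⟩ := grow (C+1)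
  have := hC m
  omega

end Counting

end Necklace
namespace Necklace

variable {d : ℕ} (N : Necklace d)

section FinFacts

lemma neZero_n : NeZero N.n := ⟨by have := N.hn; omega⟩

lemma fin_one_ne_zero : N.one ≠ (⟨0, N.npos⟩ : Fin N.n) := by
  intro h
  have : (1 : ℕ) = 0 := congrArg Fin.val h
  omega

lemma fin_add_one_ne (j : Fin N.n) : j + N.one ≠ j := by
  intro h
  have hv : (j.val + 1) % N.n = j.val := congrArg Fin.val h
  have hn := N.hn
  have hj := j.isLt
  rcases Nat.lt_or_ge (j.val + 1) N.n with h' | h'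
  · rw [Nat.mod_eq_of_lt h'] at hv; omega
  · have : j.val + 1 = N.n := by omega
    rw [this, Nat.mod_self] at hv
    omega

lemma fin_sub_one_add (k : Fin N.n) : (k - N.one) + N.one = k := by
  haveI := N.neZero_n
  exact sub_add_cancel k N.one

lemma fin_sub_one_ne (j : Fin N.n) : j - N.one ≠ j := by
  intro h
  have := congrArg (· + N.one) h
  simp only [N.fin_sub_one_add] at this
  exact N.fin_add_one_ne j this.symm

lemma fin_sub_ne_add (j : Fin N.n) : j - N.one ≠ j + N.one := by
  intro h
  have h2 := congrArg (· + N.one) h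
  simp only [N.fin_sub_one_add] at h2
  -- h2 : j = j + N.one + N.one
  have hv : j.val = ((j.val + 1) % N.n + 1) % N.n := by
    have := congrArg Fin.val h2
    rw [fin_add_one_val, fin_add_one_val] at this
    exact this
  have hn := N.hn
  have hj := j.isLt
  rcases Nat.lt_or_ge (j.val + 1) N.n with h' | h'
  · rw [Nat.mod_eq_of_lt h'] at hv
    rcases Nat.lt_or_ge (j.val + 2) N.n with h'' | h''
    · rw [Nat.mod_eq_of_lt h''] at hv; omega
    · have : j.val + 2 = N.n := by omega
      rw [this, Nat.mod_self] at hv; omega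
  · have : j.val + 1 = N.n := by omega
    rw [this, Nat.mod_self, Nat.mod_eq_of_lt (by omega)] at hv
    omega

/-- distinct indices in `Fin 3`-like situations -/
lemma fin_add_one_val_cases (i : Fin N.n) :
    ((i + N.one).val = i.val + 1 ∧ i.val + 1 < N.n) ∨
      ((i + N.one).val = 0 ∧ i.val + 1 = N.n) := by
  have h := N.fin_add_one_val i
  have hi := i.isLt
  rcases Nat.lt_or_ge (i.val + 1) N.n with h' | h'
  · left
    rw [Nat.mod_eq_of_lt h'] at h
    exact ⟨h, h'⟩
  · right
    have he : i.val + 1 = N.n := by omega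
    rw [he, Nat.mod_self] at h
    exact ⟨h, he⟩

lemma fin_adj_of_n3 (h3 : N.n = 3) {u v : Fin N.n} (huv : u ≠ v) :
    v = u + N.one ∨ u = v + N.one := by
  have hu := u.isLt
  have hv := v.isLt
  have hval : u.val ≠ v.val := fun h => huv (Fin.ext h)
  have hcu := N.fin_add_one_val_cases u
  have hcv := N.fin_add_one_val_cases v
  have hor : v.val = (u + N.one).val ∨ u.val = (v + N.one).val := by
    rcases hcu with ⟨h1, h2⟩ | ⟨h1, h2⟩ <;> rcases hcv with ⟨h3', h4⟩ | ⟨h3', h4⟩ <;> omega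
  rcases hor with h | h
  · exact Or.inl (Fin.ext h)
  · exact Or.inr (Fin.ext h)

end FinFacts

section TripleNode

/-- Extract two distinct elements from a set of `ncard ≥ 2`. -/
lemma two_of_ncard {α : Type*} {S : Set α} (h : 2 ≤ S.ncard) :
    ∃ A ∈ S, ∃ B ∈ S, A ≠ B := by
  have hfin : S.Finite := by
    by_contra h'
    have hinf : S.Infinite := h'
    rw [hinf.ncard] at h
    omega
  obtain ⟨a, b, ha, hb, hab⟩ := (Set.one_lt_ncard_iff hfin).mp (by omega)
  exact ⟨a, ha, b, hb, hab⟩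

/-- The two distinct second-level copies through the boundary, from stability. -/
lemma stable_pair (hs : N.Stable) (k : Fin N.n) :
    ∃ j₁ j₂ : Fin N.n, N.f k '' (N.f j₁ '' N.F) ≠ N.f k '' (N.f j₂ '' N.F) ∧
      ((N.f k '' (N.f j₁ '' N.F)) ∩ N.bdry k).Nonempty ∧
      ((N.f k '' (N.f j₂ '' N.F)) ∩ N.bdry k).Nonempty := by
  obtain ⟨A, hA, B, hB, hAB⟩ := two_of_ncard (hs k)
  obtain ⟨⟨j₁, hj₁⟩, hA2⟩ := hA
  obtain ⟨⟨j₂, hj₂⟩, hB2⟩ := hB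
  exact ⟨j₁, j₂, by rw [← hj₁, ← hj₂]; exact hAB, by rwa [← hj₁], by rwa [← hj₂]⟩

/-- If all main nodes coincide (possible only when n = 3 is attempted), we get a
contradiction with bounded ramification. -/
lemma allNodesEq_false (hs : N.Stable) (hbr : N.BoundedRamification)
    (p : Euc d) (hall : ∀ k, N.z k = p) (h3 : N.n = 3) : False := by
  classical
  -- p is fixed by every map
  have hfix : ∀ k, N.f k p = p := by
    intro k
    obtain ⟨j₁, j₂, hne, h1, h2⟩ := N.stable_pair hs k
    have hbp : N.bdry k = {p} := by
      rw [bdry, hall, hall]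
      simp
    rw [hbp] at h1 h2
    have hp1 : p ∈ N.f k '' (N.f j₁ '' N.F) := by
      rcases h1 with ⟨y, hy1, hy2⟩
      rcases hy2 with rfl
      exact hy1
    have hp2 : p ∈ N.f k '' (N.f j₂ '' N.F) := by
      rcases h2 with ⟨y, hy1, hy2⟩
      rcases hy2 with rfl
      exact hy1
    have hj12 : j₁ ≠ j₂ := fun h => hne (by rw [h])
    -- pull back by f k
    obtain ⟨q1, hq1, hfq1⟩ := hp1
    obtain ⟨q2, hq2, hfq2⟩ := hp2
    have hq12 : q1 = q2 := (N.f k).injective (by rw [hfq1, hfq2])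
    subst hq12
    have hqint : q1 ∈ N.f j₁ '' N.F ∩ N.f j₂ '' N.F := ⟨hq1, hq2⟩
    rcases N.fin_adj_of_n3 h3 hj12 with h | h
    · rw [h] at hqint
      rw [N.hz' j₁] at hqint
      rcases hqint with rfl
      rw [hall] at hfq1
      exact hfq1
    · rw [h] at hqint
      rw [Set.inter_comm, N.hz' j₂] at hqint
      rcases hqint with rfl
      rw [hall] at hfq1
      exact hfq1
  -- hence p belongs to every copy
  have hpF : p ∈ N.F := by
    have := N.z_mem_F ⟨0, N.npos⟩
    rwa [hall] at this
  have hwordp : ∀ σ : List (Fin N.n), N.word σ p = p := by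
    intro σ
    induction σ with
    | nil => rfl
    | cons i s ih => rw [word_apply, ih, hfix]
  have hpcopy : ∀ σ : List (Fin N.n), p ∈ N.copy σ := by
    intro σ
    exact ⟨p, hpF, hwordp σ⟩
  -- so cnt m p is at least m+1
  have hcnt : ∀ m, m + 1 ≤ N.cnt m p := by
    intro m
    have hg : ∀ jj : Fin (m+1), (List.ofFn (fun i : Fin m =>
        if (i : ℕ) < (jj : ℕ) then (⟨0, N.npos⟩ : Fin N.n) else N.one)) ∈ N.Wrd p m := by
      intro jj
      exact ⟨by simp, hpcopy _⟩
    set g : Fin (m+1) → ↥(N.Wrd p m) := fun jj => ⟨_, hg jj⟩ with hgdef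
    have hginj : Function.Injective g := by
      intro a b hab
      have h1 : (List.ofFn (fun i : Fin m => if (i : ℕ) < (a : ℕ) then (⟨0, N.npos⟩ : Fin N.n) else N.one))
          = (List.ofFn (fun i : Fin m => if (i : ℕ) < (b : ℕ) then (⟨0, N.npos⟩ : Fin N.n) else N.one)) := by
        have := congrArg Subtype.val hab
        exact this
      have h2 := List.ofFn_injective h1
      by_contra hne
      have hvne : (a : ℕ) ≠ (b : ℕ) := fun h => hne (Fin.ext h)
      rcases Nat.lt_or_ge (a : ℕ) (b : ℕ) with hlt | hge
      · have hidx : (a : ℕ) < m := by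
          have := b.isLt; omega
        have := congrFun h2 ⟨(a : ℕ), hidx⟩
        simp only at this
        rw [if_neg (by omega), if_pos (by omega)] at this
        exact N.fin_one_ne_zero this
      · have hlt' : (b : ℕ) < (a : ℕ) := by omega
        have hidx : (b : ℕ) < m := by
          have := a.isLt; omega
        have := congrFun h2 ⟨(b : ℕ), hidx⟩
        simp only at this
        rw [if_pos (by omega), if_neg (by omega)] at this
        exact N.fin_one_ne_zero this.symm
    haveI := (N.Wrd_finite p m).to_subtype
    have := Nat.card_le_card_of_injective g hginj
    · rw [Nat.card_eq_fintype_card, Fintype.card_fin, Nat.card_coe_set_eq] at this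
      exact this
  -- contradiction with bounded ramification at z 0
  obtain ⟨C, hC⟩ := hbr ⟨0, N.npos⟩
  have h1 := hC (C + 1)
  have h2 := hcnt (C + 1)
  rw [hall] at h1
  omega

end TripleNode

section Tstructure

/-- The x-children of an x-word are confined to two adjacent indices. -/
lemma Tstruct (hs : N.Stable) (hbr : N.BoundedRamification) {x : Euc d}
    {β : List (Fin N.n)} (hxβ : x ∈ N.copy β) :
    ∃ t : Fin N.n, ∀ u, x ∈ N.copy (β ++ [u]) → u = t ∨ u = t + N.one := by
  classical
  obtain ⟨t₀, ht₀⟩ := N.exists_child hxβ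
  by_cases huniq : ∀ u, x ∈ N.copy (β ++ [u]) → u = t₀
  · exact ⟨t₀, fun u hu => Or.inl (huniq u hu)⟩
  push_neg at huniq
  obtain ⟨u₁, hu₁, hu₁ne⟩ := huniq
  -- u₁ and t₀ are adjacent
  obtain ⟨a, hadj, hxa⟩ := N.splitNode (Ne.symm hu₁ne) ht₀ hu₁
  -- set t to the smaller one
  have hcase : (u₁ = t₀ + N.one) ∨ (t₀ = u₁ + N.one) := by
    rcases hadj with ⟨h, _⟩ | ⟨h, _⟩
    · exact Or.inl h
    · exact Or.inr h
  set t : Fin N.n := if u₁ = t₀ + N.one then t₀ else u₁ with ht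
  have htT : x ∈ N.copy (β ++ [t]) := by
    by_cases h : u₁ = t₀ + N.one <;> simp [ht, h, ht₀, hu₁]
  have htT1 : x ∈ N.copy (β ++ [t + N.one]) := by
    by_cases h : u₁ = t₀ + N.one
    · rw [ht, if_pos h, ← h]; exact hu₁
    · rcases hcase with h' | h'
      · exact absurd h' h
      · rw [ht, if_neg h, ← h']; exact ht₀
  refine ⟨t, fun v hv => ?_⟩
  by_contra hvnot
  push_neg at hvnot
  obtain ⟨hv1, hv2⟩ := hvnot
  haveI := N.neZero_n
  -- v is adjacent to both t and t+1
  obtain ⟨a1, hadj1, _⟩ := N.splitNode hv1 hv htT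
  obtain ⟨a2, hadj2, _⟩ := N.splitNode hv2 hv htT1
  have hvt : t = v + N.one := by
    rcases hadj1 with ⟨h, _⟩ | ⟨h, _⟩
    · exact h
    · exact absurd h hv2
  have hvt1 : v = t + N.one + N.one := by
    rcases hadj2 with ⟨h, _⟩ | ⟨h, _⟩
    · exact absurd (add_right_cancel h).symm hv1
    · exact h
  have hvt'' : t = t + N.one + N.one + N.one := by
    conv_lhs => rw [hvt, hvt1]
  have h30 : N.one + N.one + N.one = (0 : Fin N.n) := by
    have hx : t = t + (N.one + N.one + N.one) := by
      rw [← add_assoc, ← add_assoc]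
      exact hvt''
    have h' : t + (N.one + N.one + N.one) = t + (0 : Fin N.n) :=
      hx.symm.trans (add_zero t).symm
    exact add_left_cancel h'
  have hn := N.hn
  have h2v : ((N.one + N.one : Fin N.n)).val = 2 := by
    have := N.fin_add_one_val N.one
    rw [this]
    have h1 : (N.one : Fin N.n).val = 1 := rfl
    rw [h1, Nat.mod_eq_of_lt (by omega)]
  have h3v : ((N.one + N.one + N.one : Fin N.n)).val = 3 % N.n := by
    have := N.fin_add_one_val (N.one + N.one)
    rw [this, h2v]
  have h3 : N.n = 3 := by
    have h0 : ((N.one + N.one + N.one : Fin N.n)).val = 0 := by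
      rw [h30]
      rfl
    rw [h3v] at h0
    have hdvd : N.n ∣ 3 := Nat.dvd_of_mod_eq_zero h0
    have := Nat.le_of_dvd (by norm_num) hdvd
    omega
  -- node equalities
  have ht3 : t + N.one + N.one + N.one = t := hvt''.symm
  have e1 : x = N.word β (N.z t) := by
    have hrw := N.sibling_inter_adj β t
    have hx : x ∈ N.copy (β ++ [t]) ∩ N.copy (β ++ [t + N.one]) := ⟨htT, htT1⟩
    rw [hrw] at hx
    exact hx
  have e2 : x = N.word β (N.z (t + N.one)) := by
    have hrw := N.sibling_inter_adj β (t + N.one)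
    have hx : x ∈ N.copy (β ++ [t + N.one]) ∩ N.copy (β ++ [t + N.one + N.one]) :=
      ⟨htT1, by rw [← hvt1]; exact hv⟩
    rw [hrw] at hx
    exact hx
  have e3 : x = N.word β (N.z (t + N.one + N.one)) := by
    have hrw := N.sibling_inter_adj β (t + N.one + N.one)
    have hx : x ∈ N.copy (β ++ [t + N.one + N.one]) ∩
        N.copy (β ++ [t + N.one + N.one + N.one]) := by
      constructor
      · rw [← hvt1]; exact hv
      · rw [ht3]; exact htT
    rw [hrw] at hx
    exact hx
  -- all nodes equal
  have hallz : ∀ k : Fin N.n, N.z k = N.z t := by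
    intro k
    have hk : k = t + (k - t) := by rw [add_sub_cancel]
    have hlt : (k - t).val < 3 := by rw [← h3]; exact (k - t).isLt
    interval_cases hcase : (k - t).val
    · have he : k - t = (0 : Fin N.n) := Fin.ext (by rw [hcase]; rfl)
      rw [he, add_zero] at hk
      rw [hk]
    · have he : k - t = N.one := Fin.ext (by rw [hcase]; rfl)
      rw [he] at hk
      rw [hk]
      apply (N.word β).injective
      rw [← e1, ← e2]
    · have he : k - t = N.one + N.one := by
        apply Fin.ext
        rw [hcase, h2v]
      rw [he] at hk
      rw [hk]
      apply (N.word β).injective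
      rw [← add_assoc, ← e3, ← e1]
  exact N.allNodesEq_false hs hbr (N.z t) hallz h3

end Tstructure

end Necklace
namespace Necklace

variable {d : ℕ} (N : Necklace d)

section Links

/-- The chain relation on copies avoiding `x`. -/
def lrel (x : Euc d) (σ τ : List (Fin N.n)) : Prop :=
  x ∉ N.copy σ ∧ x ∉ N.copy τ ∧ (N.copy σ ∩ N.copy τ).Nonempty

/-- Chain-linkedness of copies avoiding `x`. -/
def Linked (x : Euc d) : List (Fin N.n) → List (Fin N.n) → Prop :=
  Relation.ReflTransGen (N.lrel x)

lemma lrel_symm (x : Euc d) : Symmetric (N.lrel x) := by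
  rintro σ τ ⟨h1, h2, h3⟩
  exact ⟨h2, h1, by rwa [Set.inter_comm]⟩

lemma linked_symm (x : Euc d) : Symmetric (N.Linked x) :=
  fun a b h => @Std.Symm.symm _ _ (@Relation.ReflTransGen.stdSymm _ _ ⟨N.lrel_symm x⟩) a b h

lemma linked_trans {x : Euc d} {a b c : List (Fin N.n)} (h1 : N.Linked x a b)
    (h2 : N.Linked x b c) : N.Linked x a c :=
  Relation.ReflTransGen.trans h1 h2

lemma word_single_image (j : Fin N.n) (S : Set (Euc d)) :
    N.word [j] '' S = N.f j '' S := rfl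

lemma word_append_image (s t : List (Fin N.n)) (S : Set (Euc d)) :
    N.word (s ++ t) '' S = N.word s '' (N.word t '' S) := by
  rw [← Set.image_comp]
  apply Set.image_congr'
  intro y
  exact N.word_append s t y

lemma copy_child (β : List (Fin N.n)) (j : Fin N.n) :
    N.copy (β ++ [j]) = N.word β '' (N.f j '' N.F) := by
  rw [copy_append, copy_cons, copy_nil]

lemma copy_child2 (β : List (Fin N.n)) (j j' : Fin N.n) :
    N.copy ((β ++ [j]) ++ [j']) = N.word β '' (N.f j '' (N.f j' '' N.F)) := by
  rw [copy_append, word_append_image, word_single_image, copy_cons, copy_nil]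

lemma mem_node_child_left (β : List (Fin N.n)) (a : Fin N.n) :
    N.word β (N.z a) ∈ N.copy (β ++ [a]) := by
  rw [copy_child]
  exact ⟨N.z a, (N.z_mem_copy a).1, rfl⟩

lemma mem_node_child_right (β : List (Fin N.n)) (a : Fin N.n) :
    N.word β (N.z a) ∈ N.copy (β ++ [a + N.one]) := by
  rw [copy_child]
  exact ⟨N.z a, (N.z_mem_copy a).2, rfl⟩

/-- sibling edge between avoided copies -/
lemma edge_sibling {x : Euc d} {β : List (Fin N.n)} {a : Fin N.n}
    (h1 : x ∉ N.copy (β ++ [a])) (h2 : x ∉ N.copy (β ++ [a + N.one])) :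
    N.lrel x (β ++ [a]) (β ++ [a + N.one]) :=
  ⟨h1, h2, ⟨N.word β (N.z a), N.mem_node_child_left β a, N.mem_node_child_right β a⟩⟩

lemma fin_two_val : ((N.one + N.one : Fin N.n)).val = 2 := by
  have h := N.fin_add_one_val N.one
  rw [h]
  have h1 : (N.one : Fin N.n).val = 1 := rfl
  rw [h1, Nat.mod_eq_of_lt (by have := N.hn; omega)]

lemma fin_add_val_cases (t a : Fin N.n) :
    ((t + a).val = t.val + a.val ∧ t.val + a.val < N.n) ∨
      ((t + a).val = t.val + a.val - N.n ∧ N.n ≤ t.val + a.val ∧ t.val + a.val - N.n < N.n) := by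
  have h : (t + a).val = (t.val + a.val) % N.n := rfl
  have ht := t.isLt
  have ha := a.isLt
  rcases Nat.lt_or_ge (t.val + a.val) N.n with h' | h'
  · left
    rw [Nat.mod_eq_of_lt h'] at h
    exact ⟨h, h'⟩
  · right
    have hlt : t.val + a.val - N.n < N.n := by omega
    have : (t.val + a.val) % N.n = t.val + a.val - N.n := by
      rw [Nat.mod_eq_sub_mod h', Nat.mod_eq_of_lt hlt]
    rw [this] at h
    exact ⟨h, h', hlt⟩

lemma fin_add_cancel_ne {t a : Fin N.n} (h0 : a.val ≠ 0) : t + a ≠ t := by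
  intro h
  have hv := congrArg Fin.val h
  rcases N.fin_add_val_cases t a with ⟨h1, h2⟩ | ⟨h1, h2, h3⟩ <;>
    (rw [h1] at hv; have := a.isLt; omega)

lemma fin_add_right_ne {t a b : Fin N.n} (hab : a.val ≠ b.val) : t + a ≠ t + b := by
  intro h
  haveI := N.neZero_n
  exact hab (congrArg Fin.val (add_left_cancel h))

/-- The main port-connectivity lemma: any two avoided children of an x-word are linked. -/
lemma portsLinked (hs : N.Stable) (hbr : N.BoundedRamification) {x : Euc d}
    {β : List (Fin N.n)} (hxβ : x ∈ N.copy β) :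
    (∃ j, x ∉ N.copy (β ++ [j])) ∧
    (∀ j j', x ∉ N.copy (β ++ [j]) → x ∉ N.copy (β ++ [j']) →
      N.Linked x (β ++ [j]) (β ++ [j'])) := by
  haveI := N.neZero_n
  have hone : (N.one : Fin N.n).val = 1 := rfl
  have hn := N.hn
  obtain ⟨t, hT⟩ := N.Tstruct hs hbr hxβ
  have havoid : ∀ u : Fin N.n, u.val ≠ 0 → u.val ≠ 1 → x ∉ N.copy (β ++ [t + u]) := by
    intro u h1 h2 hx
    rcases hT (t + u) hx with h | h
    · exact (N.fin_add_cancel_ne h1) h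
    · have : t + u = t + N.one := h
      exact (N.fin_add_right_ne (by omega)) this
  have htwoval : ((N.one + N.one : Fin N.n)).val = 2 := N.fin_two_val
  set hub : Fin N.n := t + (N.one + N.one) with hhub
  have hhubavoid : x ∉ N.copy (β ++ [hub]) := havoid _ (by omega) (by omega)
  -- the walk along the arc
  have hwalk : ∀ (i : ℕ) (u : Fin N.n), u.val = i → 2 ≤ i →
      N.Linked x (β ++ [hub]) (β ++ [t + u]) := by
    intro i
    induction i with
    | zero => intro u _ h2; omega
    | succ i ih =>
        intro u hu h2
        by_cases hi2 : i + 1 = 2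
        · have : u = N.one + N.one := Fin.ext (by omega)
          rw [this, ← hhub]
          exact Relation.ReflTransGen.refl
        · have h2i : 2 ≤ i := by omega
          have hiu := u.isLt
          have hilt : i < N.n := by omega
          set u' : Fin N.n := ⟨i, hilt⟩ with hu'
          have hu'v : u'.val = i := rfl
          have hustep : u = u' + N.one := by
            apply Fin.ext
            have : (u' + N.one).val = (i + 1) % N.n := rfl
            rw [this, Nat.mod_eq_of_lt (by omega)]
            omega
          have havi : x ∉ N.copy (β ++ [t + u']) := havoid u' (by omega) (by omega)
          have havi1 : x ∉ N.copy (β ++ [t + u]) := havoid u (by omega) (by omega)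
          refine Relation.ReflTransGen.tail (ih u' hu'v h2i) ?_
          have hrw : t + u = (t + u') + N.one := by rw [hustep, add_assoc]
          rw [hrw] at havi1
          rw [hrw]
          exact N.edge_sibling havi havi1
  -- link every avoided child to the hub
  have hto : ∀ j : Fin N.n, x ∉ N.copy (β ++ [j]) → N.Linked x (β ++ [j]) (β ++ [hub]) := by
    intro j hj
    have hδlt := (j - t).isLt
    have hδ : j = t + (j - t) := by rw [add_sub_cancel]
    by_cases h0 : (j - t).val = 0
    · -- j = t
      have hjt : j = t := by
        have he : j - t = 0 := Fin.ext (by rw [h0]; rfl)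
        rw [he, add_zero] at hδ
        exact hδ
      have hlast : N.n - 1 < N.n := by omega
      set a : Fin N.n := ⟨N.n - 1, hlast⟩ with ha
      have hav : a.val = N.n - 1 := rfl
      have hw := hwalk (N.n - 1) a hav (by omega)
      have haone : (t + a) + N.one = t := by
        rw [add_assoc]
        have hz : a + N.one = 0 := by
          apply Fin.ext
          have h1 : (a + N.one).val = (N.n - 1 + 1) % N.n := rfl
          have h2 : ((0 : Fin N.n)).val = 0 := rfl
          rw [h1, h2]
          have hnn : N.n - 1 + 1 = N.n := by omega
          rw [hnn, Nat.mod_self]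
        rw [hz, add_zero]
      have hava : x ∉ N.copy (β ++ [t + a]) := havoid a (by omega) (by omega)
      have hjt' : x ∉ N.copy (β ++ [(t + a) + N.one]) := by
        rw [haone]; rwa [hjt] at hj
      have hedge := N.edge_sibling hava hjt'
      rw [haone] at hedge
      rw [hjt]
      exact Relation.ReflTransGen.trans
        (Relation.ReflTransGen.single (N.lrel_symm x hedge)) (N.linked_symm x hw)
    by_cases h1 : (j - t).val = 1
    · -- j = t + 1
      have hjt : j = t + N.one := by
        have he : j - t = N.one := Fin.ext (by rw [h1, hone])
        rw [he] at hδ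
        exact hδ
      have hha : j + N.one = t + (N.one + N.one) := by rw [hjt, add_assoc]
      have hedge := N.edge_sibling hj (by rw [hha]; exact hhubavoid)
      rw [hha] at hedge
      exact Relation.ReflTransGen.single hedge
    · have hw := hwalk (j - t).val (j - t) rfl (by omega)
      rw [← hδ] at hw
      exact N.linked_symm x hw
  refine ⟨⟨hub, hhubavoid⟩, fun j j' hj hj' => ?_⟩
  exact Relation.ReflTransGen.trans (hto j hj) (N.linked_symm x (hto j' hj'))

end Links

end Necklace
namespace Necklace

variable {d : ℕ} (N : Necklace d)

section UpDown

/-- Downward link: from a port of an x-word `β` into the subtree of a given x-child. -/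
lemma downLink (hs : N.Stable) (hbr : N.BoundedRamification) {x : Euc d}
    {β : List (Fin N.n)} {j₁ : Fin N.n} (hxβ : x ∈ N.copy β)
    (hxj₁ : x ∈ N.copy (β ++ [j₁])) :
    ∃ (P : Fin N.n) (dd : List (Fin N.n)) (jj : Fin N.n),
      x ∉ N.copy (β ++ [P]) ∧ x ∈ N.copy dd ∧ (∃ γ, dd = (β ++ [j₁]) ++ γ) ∧
      x ∉ N.copy (dd ++ [jj]) ∧ (N.copy (β ++ [P]) ∩ N.copy (dd ++ [jj])).Nonempty := by
  haveI := N.neZero_n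
  obtain ⟨t, hT⟩ := N.Tstruct hs hbr hxβ
  -- find a port neighbour P of j₁ with shared node q'
  have hstep1 : ∃ (P : Fin N.n) (q' : Euc d), x ∉ N.copy (β ++ [P]) ∧
      q' ∈ N.copy (β ++ [P]) ∧ q' ∈ N.copy (β ++ [j₁]) := by
    by_cases hnb : x ∈ N.copy (β ++ [j₁ + N.one])
    · have hj₁t : j₁ = t := by
        rcases hT j₁ hxj₁ with h | h
        · exact h
        · exfalso
          rcases hT (j₁ + N.one) hnb with h' | h'
          · rw [h] at h'
            have h'' : t + (N.one + N.one) = t := by rw [← add_assoc]; exact h'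
            exact N.fin_add_cancel_ne (by rw [N.fin_two_val]; omega) h''
          · have h'' : j₁ = t := add_right_cancel h'
            rw [h''] at h
            exact N.fin_add_cancel_ne
              (by have h1 : (N.one : Fin N.n).val = 1 := rfl; omega) h.symm
      refine ⟨j₁ - N.one, N.word β (N.z (j₁ - N.one)), ?_, ?_, ?_⟩
      · intro hx
        rcases hT _ hx with h | h
        · rw [hj₁t] at h
          exact N.fin_sub_one_ne t h
        · rw [hj₁t] at h
          exact N.fin_sub_ne_add t h
      · exact N.mem_node_child_left β (j₁ - N.one)
      · have hmm := N.mem_node_child_right β (j₁ - N.one)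
        rwa [N.fin_sub_one_add j₁] at hmm
    · exact ⟨j₁ + N.one, N.word β (N.z j₁), hnb, N.mem_node_child_right β j₁,
        N.mem_node_child_left β j₁⟩
  obtain ⟨P, q', hPav, hq'P, hq'j⟩ := hstep1
  have hq'x : q' ≠ x := fun h => hPav (h ▸ hq'P)
  obtain ⟨m₀, hm₀⟩ := N.smallSep hq'x
  have desc : ∀ (k : ℕ) (dd : List (Fin N.n)), x ∈ N.copy dd → q' ∈ N.copy dd →
      m₀ ≤ dd.length + k → (∃ γ, dd = (β ++ [j₁]) ++ γ) →
      ∃ (dd' : List (Fin N.n)) (jj : Fin N.n), x ∈ N.copy dd' ∧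
        (∃ γ, dd' = (β ++ [j₁]) ++ γ) ∧ x ∉ N.copy (dd' ++ [jj]) ∧
        q' ∈ N.copy (dd' ++ [jj]) := by
    intro k
    induction k with
    | zero =>
        intro dd hx hq hlen _
        exact (hm₀ dd (by omega) hq hx).elim
    | succ k ih =>
        intro dd hx hq hlen hext
        obtain ⟨jc, hjc⟩ := N.exists_child hq
        by_cases hxc : x ∈ N.copy (dd ++ [jc])
        · refine ih (dd ++ [jc]) hxc hjc (by simp; omega) ?_
          obtain ⟨γ, hγ⟩ := hext
          exact ⟨γ ++ [jc], by rw [hγ, List.append_assoc]⟩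
        · exact ⟨dd, jc, hx, hext, hxc, hjc⟩
  obtain ⟨dd, jj, hdx, hdext, hdjav, hdq⟩ :=
    desc m₀ (β ++ [j₁]) hxj₁ hq'j (by omega) ⟨[], by simp⟩
  exact ⟨P, dd, jj, hPav, hdx, hdext, hdjav, ⟨q', hq'P, hdq⟩⟩

/-- Upward link: in the tame regime, a port of the x-child connects to a port of the parent. -/
lemma upLink (hs : N.Stable) {x : Euc d} {M : ℕ}
    (huniq : ∀ β' : List (Fin N.n), x ∈ N.copy β' → M ≤ β'.length →
      ∀ a b, x ∈ N.copy (β' ++ [a]) → x ∈ N.copy (β' ++ [b]) → a = b)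
    {β : List (Fin N.n)} {j : Fin N.n} (hMβ : M ≤ β.length) (hxβ : x ∈ N.copy β)
    (hxj : x ∈ N.copy (β ++ [j])) :
    ∃ p1 p2, x ∉ N.copy ((β ++ [j]) ++ [p1]) ∧ x ∉ N.copy (β ++ [p2]) ∧
      (N.copy ((β ++ [j]) ++ [p1]) ∩ N.copy (β ++ [p2])).Nonempty := by
  haveI := N.neZero_n
  obtain ⟨j₁, j₂, hne, h1, h2⟩ := N.stable_pair hs j
  have hj12 : j₁ ≠ j₂ := fun h => hne (by rw [h])
  have hMβj : M ≤ (β ++ [j]).length := by simp; omega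
  have hxone : ¬ (x ∈ N.copy ((β ++ [j]) ++ [j₁]) ∧ x ∈ N.copy ((β ++ [j]) ++ [j₂])) := by
    rintro ⟨ha, hb⟩
    exact hj12 (huniq (β ++ [j]) hxj hMβj j₁ j₂ ha hb)
  -- choose the avoided one among the two stability children
  have hchoose : ∃ (p1 : Fin N.n) (y : Euc d), x ∉ N.copy ((β ++ [j]) ++ [p1]) ∧
      y ∈ N.f j '' (N.f p1 '' N.F) ∧ y ∈ N.bdry j := by
    by_cases hx1 : x ∈ N.copy ((β ++ [j]) ++ [j₁])
    · obtain ⟨y, hyset, hybd⟩ := h2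
      refine ⟨j₂, y, ?_, hyset, hybd⟩
      intro hx2
      exact hxone ⟨hx1, hx2⟩
    · obtain ⟨y, hyset, hybd⟩ := h1
      exact ⟨j₁, y, hx1, hyset, hybd⟩
  obtain ⟨p1, y, hp1av, hyset, hybd⟩ := hchoose
  have hq : N.word β y ∈ N.copy ((β ++ [j]) ++ [p1]) := by
    rw [copy_child2]
    exact ⟨y, hyset, rfl⟩
  rw [bdry] at hybd
  rcases hybd with hy | hy
  · -- y = z (j - 1), port p2 := j - 1
    refine ⟨p1, j - N.one, hp1av, ?_, ?_⟩
    · intro hx2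
      have := huniq β hxβ hMβ (j - N.one) j hx2 hxj
      exact N.fin_sub_one_ne j this
    · refine ⟨N.word β y, hq, ?_⟩
      rw [hy]
      exact N.mem_node_child_left β (j - N.one)
  · -- y = z j, port p2 := j + 1
    simp only [Set.mem_singleton_iff] at hy
    refine ⟨p1, j + N.one, hp1av, ?_, ?_⟩
    · intro hx2
      have := huniq β hxβ hMβ (j + N.one) j hx2 hxj
      exact N.fin_add_one_ne j this
    · refine ⟨N.word β y, hq, ?_⟩
      rw [hy]
      exact N.mem_node_child_right β j

end UpDown

end Necklace
namespace Necklace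

variable {d : ℕ} (N : Necklace d)

section Assembly

/-- High-region claim: above the tame level, ports of descendants are linked to
ports of the ancestor. -/
lemma highClaim (hs : N.Stable) (hbr : N.BoundedRamification) {x : Euc d} {M : ℕ}
    (huniq : ∀ β' : List (Fin N.n), x ∈ N.copy β' → M ≤ β'.length →
      ∀ a b, x ∈ N.copy (β' ++ [a]) → x ∈ N.copy (β' ++ [b]) → a = b) :
    ∀ (γ β : List (Fin N.n)), M ≤ β.length → x ∈ N.copy β → x ∈ N.copy (β ++ γ) →
      ∀ jδ jβ, x ∉ N.copy ((β ++ γ) ++ [jδ]) → x ∉ N.copy (β ++ [jβ]) →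
        N.Linked x ((β ++ γ) ++ [jδ]) (β ++ [jβ]) := by
  intro γ
  induction γ using List.reverseRecOn with
  | nil =>
      intro β hM hxβ hxδ jδ jβ h1 h2
      rw [List.append_nil] at h1 ⊢
      exact (N.portsLinked hs hbr hxβ).2 jδ jβ h1 h2
  | append_singleton γ' a ih =>
      intro β hM hxβ hxδ jδ jβ h1 h2
      rw [← List.append_assoc] at hxδ h1 ⊢
      have hxpδ : x ∈ N.copy (β ++ γ') := N.copy_append_subset _ [a] hxδ
      have hMpδ : M ≤ (β ++ γ').length := by simp; omega
      obtain ⟨p1, p2, hp1av, hp2av, hne⟩ := N.upLink hs huniq hMpδ hxpδ hxδ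
      have hL1 : N.Linked x (((β ++ γ') ++ [a]) ++ [jδ]) (((β ++ γ') ++ [a]) ++ [p1]) :=
        (N.portsLinked hs hbr hxδ).2 jδ p1 h1 hp1av
      have hedge : N.lrel x (((β ++ γ') ++ [a]) ++ [p1]) ((β ++ γ') ++ [p2]) :=
        ⟨hp1av, hp2av, hne⟩
      have hL2 := ih β hM hxβ hxpδ p2 jβ hp2av h2
      exact N.linked_trans (N.linked_trans hL1 (Relation.ReflTransGen.single hedge)) hL2

/-- All ports of all x-words below `β` are linked to the ports of `β`. -/
lemma linkAll (hs : N.Stable) (hbr : N.BoundedRamification) {x : Euc d} {M : ℕ}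
    (huniq : ∀ β' : List (Fin N.n), x ∈ N.copy β' → M ≤ β'.length →
      ∀ a b, x ∈ N.copy (β' ++ [a]) → x ∈ N.copy (β' ++ [b]) → a = b) :
    ∀ (k : ℕ) (β : List (Fin N.n)), x ∈ N.copy β → M ≤ β.length + k →
      ∀ (γ : List (Fin N.n)) (jδ jβ : Fin N.n), x ∈ N.copy (β ++ γ) →
        x ∉ N.copy ((β ++ γ) ++ [jδ]) → x ∉ N.copy (β ++ [jβ]) →
        N.Linked x ((β ++ γ) ++ [jδ]) (β ++ [jβ]) := by
  intro k
  induction k with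
  | zero =>
      intro β hxβ hM γ jδ jβ hxγ h1 h2
      exact N.highClaim hs hbr huniq γ β (by omega) hxβ hxγ jδ jβ h1 h2
  | succ k ih =>
      intro β hxβ hM γ jδ jβ hxγ h1 h2
      by_cases hMβ : M ≤ β.length
      · exact N.highClaim hs hbr huniq γ β hMβ hxβ hxγ jδ jβ h1 h2
      · cases γ with
        | nil =>
            rw [List.append_nil] at h1 ⊢
            exact (N.portsLinked hs hbr hxβ).2 jδ jβ h1 h2
        | cons j₁ γ' =>
            have hassoc : β ++ (j₁ :: γ') = (β ++ [j₁]) ++ γ' := by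
              rw [List.append_cons]
            rw [hassoc] at hxγ h1 ⊢
            have hxσ₁ : x ∈ N.copy (β ++ [j₁]) := N.copy_append_subset _ γ' hxγ
            obtain ⟨jσ, hjσav⟩ := (N.portsLinked hs hbr hxσ₁).1
            have hlen : M ≤ (β ++ [j₁]).length + k := by simp; omega
            have hL1 : N.Linked x (((β ++ [j₁]) ++ γ') ++ [jδ]) ((β ++ [j₁]) ++ [jσ]) :=
              ih (β ++ [j₁]) hxσ₁ hlen γ' jδ jσ hxγ h1 hjσav
            obtain ⟨P, dd, jj, hPav, hddx, ⟨γ₂, hγ₂⟩, hddjav, hddne⟩ :=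
              N.downLink hs hbr hxβ hxσ₁
            rw [hγ₂] at hddx hddjav hddne
            have hL2 : N.Linked x (((β ++ [j₁]) ++ γ₂) ++ [jj]) ((β ++ [j₁]) ++ [jσ]) :=
              ih (β ++ [j₁]) hxσ₁ hlen γ₂ jj jσ hddx hddjav hjσav
            have hedge : N.lrel x (((β ++ [j₁]) ++ γ₂) ++ [jj]) (β ++ [P]) :=
              ⟨hddjav, hPav, by rwa [Set.inter_comm]⟩
            have hL3 : N.Linked x (β ++ [P]) (β ++ [jβ]) :=
              (N.portsLinked hs hbr hxβ).2 P jβ hPav h2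
            refine N.linked_trans hL1 ?_
            refine N.linked_trans (N.linked_symm x hL2) ?_
            exact N.linked_trans (Relation.ReflTransGen.single hedge) hL3

/-- Every avoided copy is linked to a port of some x-word. -/
lemma climb {x : Euc d} (hxF : x ∈ N.F) :
    ∀ (k : ℕ) (σ : List (Fin N.n)), σ.length ≤ k → x ∉ N.copy σ →
      ∃ (β : List (Fin N.n)) (jp : Fin N.n), x ∈ N.copy β ∧ x ∉ N.copy (β ++ [jp]) ∧
        N.Linked x σ (β ++ [jp]) := by
  intro k
  induction k with
  | zero =>
      intro σ hlen hav
      rw [Nat.le_zero, List.length_eq_zero_iff] at hlen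
      subst hlen
      rw [copy_nil] at hav
      exact absurd hxF hav
  | succ k ih =>
      intro σ hlen hav
      rcases List.eq_nil_or_concat σ with rfl | ⟨L, b, rfl⟩
      · rw [copy_nil] at hav
        exact absurd hxF hav
      · rw [List.concat_eq_append] at hav hlen ⊢
        by_cases hxL : x ∈ N.copy L
        · exact ⟨L, b, hxL, hav, Relation.ReflTransGen.refl⟩
        · have hlenL : L.length ≤ k := by simp at hlen; omega
          obtain ⟨β, jp, hβ1, hβ2, hβ3⟩ := ih L hlenL hxL
          refine ⟨β, jp, hβ1, hβ2, ?_⟩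
          refine Relation.ReflTransGen.head ?_ hβ3
          exact ⟨hav, hxL, (N.copy_nonempty (L ++ [b])).mono
            (Set.subset_inter (Set.Subset.refl _) (N.copy_append_subset L [b])) |>.imp
            (fun y hy => hy)⟩

/-- transfer a Linked chain to the subtype relation -/
lemma toSubtype {x : Euc d} :
    ∀ {σ τ : List (Fin N.n)}, N.Linked x σ τ → (hσ : x ∉ N.copy σ) → (hτ : x ∉ N.copy τ) →
      Relation.ReflTransGen
        (fun i j : {σ : List (Fin N.n) // x ∉ N.copy σ} =>
          ((N.copy i.1) ∩ (N.copy j.1)).Nonempty) ⟨σ, hσ⟩ ⟨τ, hτ⟩ := by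
  intro σ τ h
  induction h with
  | refl => intro hσ hτ; exact Relation.ReflTransGen.refl
  | tail hab hrel ih =>
      intro hσ hτ
      exact Relation.ReflTransGen.tail (ih hσ hrel.1) hrel.2.2

end Assembly

end Necklace
/-- Every stable necklace of bounded ramification in `ℝ^d` has no cut points. -/
theorem Necklace.noCutPoints_of_stable_boundedRamification {d : ℕ} (N : Necklace d)
    (hs : N.Stable) (hbr : N.BoundedRamification) : N.NoCutPoints := by
  intro x hxF
  classical
  obtain ⟨M, huniq⟩ := N.exists_tame hbr x
  have hxnil : x ∈ N.copy [] := by rwa [copy_nil]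
  -- a port of the root
  obtain ⟨j₀, hj₀av⟩ := (N.portsLinked hs hbr hxnil).1
  -- representation of F \ {x} as a union of avoided copies
  have hrepr : N.F \ {x} = ⋃ (i : {σ : List (Fin N.n) // x ∉ N.copy σ}), N.copy i.1 := by
    apply Set.Subset.antisymm
    · rintro y ⟨hyF, hyx⟩
      have hyx' : x ≠ y := fun h => hyx (by rw [Set.mem_singleton_iff]; exact h.symm)
      obtain ⟨m₀, hm₀⟩ := N.smallSep hyx'
      obtain ⟨σ, hσlen, hσy⟩ := N.exists_word_level hyF m₀
      have hσav : x ∉ N.copy σ := fun hx => hm₀ σ (by omega) hx hσy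
      exact Set.mem_iUnion.mpr ⟨⟨σ, hσav⟩, hσy⟩
    · rintro y hy
      rcases Set.mem_iUnion.mp hy with ⟨⟨σ, hσav⟩, hyσ⟩
      refine ⟨N.copy_subset σ hyσ, ?_⟩
      intro h
      rw [Set.mem_singleton_iff] at h
      exact hσav (h ▸ hyσ)
  rw [hrepr]
  constructor
  · -- nonempty
    obtain ⟨y, hy⟩ := N.copy_nonempty [j₀]
    have : ([j₀] : List (Fin N.n)) = [] ++ [j₀] := by simp
    exact ⟨y, Set.mem_iUnion.mpr ⟨⟨[j₀], by rw [this]; exact hj₀av⟩, hy⟩⟩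
  · -- preconnected
    apply IsPreconnected.iUnion_of_reflTransGen
    · intro i
      exact N.copy_preconnected i.1
    · rintro ⟨σ, hσav⟩ ⟨τ, hτav⟩
      -- climb both to ports, link ports through the root port
      obtain ⟨β₁, jp₁, hβ₁x, hβ₁av, hσL⟩ := N.climb hxF σ.length σ le_rfl hσav
      obtain ⟨β₂, jp₂, hβ₂x, hβ₂av, hτL⟩ := N.climb hxF τ.length τ le_rfl hτav
      have hL1 : N.Linked x (β₁ ++ [jp₁]) ([] ++ [j₀]) := by
        have := N.linkAll hs hbr huniq M [] hxnil (by simp) β₁ jp₁ j₀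
          (by simpa using hβ₁x) (by simpa using hβ₁av) hj₀av
        simpa using this
      have hL2 : N.Linked x (β₂ ++ [jp₂]) ([] ++ [j₀]) := by
        have := N.linkAll hs hbr huniq M [] hxnil (by simp) β₂ jp₂ j₀
          (by simpa using hβ₂x) (by simpa using hβ₂av) hj₀av
        simpa using this
      have hchain : N.Linked x σ τ :=
        N.linked_trans hσL (N.linked_trans hL1 (N.linked_symm x
          (N.linked_trans hτL hL2)))
      exact N.toSubtype hchain hσav hτav
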